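/- A bipartite graph with a unique perfect matching has a pendant edge (a vertex of degree 1). -/

import Mathlib

open scoped Classical

/-- Degree of a vertex in a simple graph (as a cardinality, avoiding decidability). -/
noncomputable def sachsDeg {n : ℕ} (H : SimpleGraph (Fin n)) (v : Fin n) : ℕ :=
  Nat.card {w // H.Adj v w}

/-- `M` is a perfect matching of `G`, viewed as a spanning subgraph of `K₂` components. -/
def IsPerfectMatchingSub {n : ℕ} (G M : SimpleGraph (Fin n)) : Prop :=
  M ≤ G ∧ ∀ v, sachsDeg M v = 1

/-- Auxiliary: alternating walk, matching edge on even steps, non-matching on odd steps. -/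
noncomputable def sachsWalk {n : ℕ} (m g : Fin n → Fin n) (v0 : Fin n) : ℕ → Fin n
  | 0 => v0
  | (k+1) => if k % 2 = 0 then m (sachsWalk m g v0 k) else g (sachsWalk m g v0 k)

/-- Auxiliary: the pairing of indices along the flipped cycle `f i, ..., f (j-1)`. -/
def sachsPair (i j k : ℕ) : ℕ :=
  if k = i then j - 1 else if k = j - 1 then i else if k % 2 = 1 then k + 1 else k - 1

/-- Auxiliary: the new partner function after flipping along the cycle. -/
noncomputable def sachsNew {n : ℕ} (m : Fin n → Fin n) (f : ℕ → Fin n) (i j : ℕ)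
    (v : Fin n) : Fin n :=
  if h : ∃ k, i ≤ k ∧ k < j ∧ f k = v then f (sachsPair i j (Classical.choose h)) else m v

/-- Auxiliary: the matching graph induced by a partner function. -/
def sachsMatch {n : ℕ} (p : Fin n → Fin n) : SimpleGraph (Fin n) where
  Adj v w := (p v = w ∨ p w = v) ∧ v ≠ w
  symm := ⟨fun v w ⟨h, hne⟩ => ⟨h.symm, hne.symm⟩⟩
  loopless := ⟨fun v ⟨_, hne⟩ => hne rfl⟩

/-- A (nonempty) bipartite graph with a unique perfect matching has a
pendant edge, i.e. a vertex of degree `1`. -/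
theorem bipartite_unique_perfect_matching_has_pendant
    {n : ℕ} (hn : 0 < n) (G : SimpleGraph (Fin n))
    (c : Fin n → Bool) (hc : ∀ i j, G.Adj i j → c i ≠ c j)
    (huniq : ∃! M : SimpleGraph (Fin n), IsPerfectMatchingSub G M) :
    ∃ v, sachsDeg G v = 1 := by
  classical
  by_contra hno
  push_neg at hno
  obtain ⟨M, ⟨hMle, hMdeg⟩, hMun⟩ := huniq
  -- the partner function of the matching
  have hM1 : ∀ v, ∃ w, M.Adj v w ∧ ∀ y, M.Adj v y → y = w := by
    intro v
    have h := hMdeg v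
    rw [sachsDeg, Nat.card_eq_one_iff_unique] at h
    obtain ⟨hs, ⟨w, hw⟩⟩ := h
    refine ⟨w, hw, fun y hy => ?_⟩
    exact congrArg Subtype.val (hs.allEq ⟨y, hy⟩ ⟨w, hw⟩)
  choose m hmadj hmu using hM1
  have hminv : ∀ v, m (m v) = v := fun v => (hmu (m v) v (hmadj v).symm).symm
  have hGm : ∀ v, G.Adj v (m v) := fun v => hMle (hmadj v)
  -- every vertex has a second neighbor besides its partner
  have hg' : ∀ v, ∃ w, G.Adj v w ∧ w ≠ m v := by
    intro v
    by_contra h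
    push_neg at h
    apply hno v
    rw [sachsDeg, Nat.card_eq_one_iff_unique]
    refine ⟨⟨fun a b => Subtype.ext ?_⟩, ⟨m v, hGm v⟩⟩
    rw [h a.1 a.2, h b.1 b.2]
  choose g hgadj hgne using hg'
  set f : ℕ → Fin n := sachsWalk m g ⟨0, hn⟩ with hf
  have hfs0 : ∀ k, k % 2 = 0 → f (k+1) = m (f k) := by
    intro k hk
    rw [hf]
    show sachsWalk m g ⟨0, hn⟩ (k+1) = _
    rw [sachsWalk, if_pos hk]
  have hfs1 : ∀ k, k % 2 = 1 → f (k+1) = g (f k) := by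
    intro k hk
    rw [hf]
    show sachsWalk m g ⟨0, hn⟩ (k+1) = _
    rw [sachsWalk, if_neg (by omega)]
  have hGadj : ∀ k, G.Adj (f k) (f (k+1)) := by
    intro k
    rcases Nat.mod_two_eq_zero_or_one k with hk | hk
    · rw [hfs0 k hk]; exact hGm (f k)
    · rw [hfs1 k hk]; exact hgadj (f k)
  -- colors alternate along the walk
  have hflip : ∀ k, c (f (k+1)) = !(c (f k)) := by
    intro k
    have := hc _ _ (hGadj k)
    cases h1 : c (f k) <;> cases h2 : c (f (k+1)) <;> revert this <;> rw [h1, h2] <;> decide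
  have hcol : ∀ k, c (f k) = if k % 2 = 0 then c (f 0) else !(c (f 0)) := by
    intro k
    induction k with
    | zero => simp
    | succ k ih =>
      rw [hflip k, ih]
      rcases Nat.mod_two_eq_zero_or_one k with hk | hk
      · rw [if_pos hk, if_neg (by omega)]
      · rw [if_neg (by omega), if_pos (by omega), Bool.not_not]
  -- pigeonhole: the walk repeats
  have hex : ∃ J, ∃ I, I < J ∧ f I = f J := by
    obtain ⟨a, b, hab, hfab⟩ := Fintype.exists_ne_map_eq_of_card_lt
      (fun x : Fin (n+1) => f x) (by simpa using Nat.lt_succ_self n)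
    rcases Ne.lt_or_gt hab with h | h
    · exact ⟨b, a, h, hfab⟩
    · exact ⟨a, b, h, hfab.symm⟩
  set j := Nat.find hex with hjdef
  obtain ⟨i, hij, hfij⟩ := Nat.find_spec hex
  rw [← hjdef] at hij hfij
  have hinj : ∀ a b, a < b → b < j → f a ≠ f b := by
    intro a b h1 h2 h3
    exact Nat.find_min hex h2 ⟨a, h1, h3⟩
  -- parity facts: i and j are both even, and j ≥ i + 4
  have hceq : c (f i) = c (f j) := congrArg c hfij
  have hpar : i % 2 = j % 2 := by
    by_contra hp
    rw [hcol i, hcol j] at hceq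
    rcases Nat.mod_two_eq_zero_or_one i with h1 | h1 <;>
      rcases Nat.mod_two_eq_zero_or_one j with h2 | h2 <;>
      simp [h1, h2] at hceq hp <;> omega
  have hieven : i % 2 = 0 := by
    rcases Nat.mod_two_eq_zero_or_one i with h | h
    · exact h
    · exfalso
      have hi1 : 1 ≤ i := by omega
      have e1 : f i = m (f (i-1)) := by
        have := hfs0 (i-1) (by omega)
        rwa [Nat.sub_add_cancel hi1] at this
      have e2 : f j = m (f (j-1)) := by
        have := hfs0 (j-1) (by omega)
        rwa [Nat.sub_add_cancel (by omega)] at this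
      have h3 : f (i-1) = f (j-1) := by
        have h4 : m (f i) = m (f j) := by rw [hfij]
        rwa [e1, e2, hminv, hminv] at h4
      exact hinj (i-1) (j-1) (by omega) (by omega) h3
  have hjeven : j % 2 = 0 := by omega
  have hjne : j ≠ i + 2 := by
    intro h
    have h1 : f (i+2) = g (f (i+1)) := hfs1 (i+1) (by omega)
    have h2 : f (i+1) = m (f i) := hfs0 i hieven
    have h3 : g (f (i+1)) ≠ f i := by
      have h6 := hgne (f (i+1))
      have hm2 : m (f (i+1)) = f i := by rw [h2, hminv]
      rwa [hm2] at h6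
    apply h3
    rw [← h1, ← h]
    exact hfij.symm
  have h4 : i + 4 ≤ j := by omega
  -- the index pairing is a fixed-point-free involution of [i, j)
  have hpmem : ∀ k, i ≤ k → k < j →
      i ≤ sachsPair i j k ∧ sachsPair i j k < j ∧ sachsPair i j k ≠ k := by
    intro k h1 h2
    unfold sachsPair
    split_ifs <;> omega
  have hpinv : ∀ k, i ≤ k → k < j → sachsPair i j (sachsPair i j k) = k := by
    intro k h1 h2
    unfold sachsPair
    split_ifs <;> omega
  set p := sachsNew m f i j with hpdef
  have hponS : ∀ k, i ≤ k → k < j → p (f k) = f (sachsPair i j k) := by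
    intro k h1 h2
    have hex2 : ∃ k', i ≤ k' ∧ k' < j ∧ f k' = f k := ⟨k, h1, h2, rfl⟩
    rw [hpdef]
    simp only [sachsNew]
    rw [dif_pos hex2]
    obtain ⟨ha, hb, hcc⟩ := Classical.choose_spec hex2
    have hk : Classical.choose hex2 = k := by
      by_contra hne
      rcases Nat.lt_or_ge (Classical.choose hex2) k with h | h
      · exact hinj _ _ h h2 hcc
      · exact hinj k _ (by omega) hb hcc.symm
    rw [hk]
  have hnotS : ∀ v, (∀ k, i ≤ k → k < j → f k ≠ v) → p v = m v := by
    intro v hv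
    rw [hpdef]
    simp only [sachsNew]
    rw [dif_neg]
    push_neg
    exact fun k h1 h2 => hv k h1 h2
  have hmclosed : ∀ k, i ≤ k → k < j → ∃ k', i ≤ k' ∧ k' < j ∧ f k' = m (f k) := by
    intro k h1 h2
    rcases Nat.mod_two_eq_zero_or_one k with hk | hk
    · exact ⟨k+1, by omega, by omega, hfs0 k hk⟩
    · refine ⟨k-1, by omega, by omega, ?_⟩
      have h5 := hfs0 (k-1) (by omega)
      rw [Nat.sub_add_cancel (by omega)] at h5
      rw [h5, hminv]
  -- the new partner function is a fixed-point-free involution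
  have hpinvol : ∀ v, p (p v) = v := by
    intro v
    by_cases hv : ∃ k, i ≤ k ∧ k < j ∧ f k = v
    · obtain ⟨k, h1, h2, rfl⟩ := hv
      rw [hponS k h1 h2, hponS _ (hpmem k h1 h2).1 (hpmem k h1 h2).2.1, hpinv k h1 h2]
    · push_neg at hv
      rw [hnotS v hv]
      have hv2 : ∀ k, i ≤ k → k < j → f k ≠ m v := by
        intro k h1 h2 heq
        obtain ⟨k', h1', h2', heq'⟩ := hmclosed k h1 h2
        apply hv k' h1' h2'
        rw [heq', heq, hminv]
      rw [hnotS (m v) hv2, hminv]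
  have hpfpf : ∀ v, p v ≠ v := by
    intro v
    by_cases hv : ∃ k, i ≤ k ∧ k < j ∧ f k = v
    · obtain ⟨k, h1, h2, rfl⟩ := hv
      rw [hponS k h1 h2]
      obtain ⟨ha, hb, hcne⟩ := hpmem k h1 h2
      rcases Nat.lt_or_ge (sachsPair i j k) k with h | h
      · exact hinj _ _ h h2
      · exact fun he => hinj k _ (by omega) hb he.symm
    · push_neg at hv
      rw [hnotS v hv]
      exact fun he => M.irrefl (he ▸ hmadj v)
  -- the new partner is always a G-neighbor
  have hGp : ∀ v, G.Adj v (p v) := by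
    intro v
    by_cases hv : ∃ k, i ≤ k ∧ k < j ∧ f k = v
    · obtain ⟨k, h1, h2, rfl⟩ := hv
      rw [hponS k h1 h2]
      by_cases hki : k = i
      · have hp1 : sachsPair i j k = j - 1 := by unfold sachsPair; rw [if_pos hki]
        rw [hp1, hki]
        have h5 := (hGadj (j-1)).symm
        rw [show j - 1 + 1 = j from by omega] at h5
        rwa [← hfij] at h5
      · by_cases hkj : k = j - 1
        · have hp1 : sachsPair i j k = i := by unfold sachsPair; rw [if_neg hki, if_pos hkj]
          rw [hp1, hkj, hfij]
          have h5 := hGadj (j-1)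
          rwa [show j - 1 + 1 = j from by omega] at h5
        · rcases Nat.mod_two_eq_zero_or_one k with hk | hk
          · have hp1 : sachsPair i j k = k - 1 := by
              unfold sachsPair; rw [if_neg hki, if_neg hkj, if_neg (by omega)]
            rw [hp1]
            have h5 := (hGadj (k-1)).symm
            rwa [show k - 1 + 1 = k from by omega] at h5
          · have hp1 : sachsPair i j k = k + 1 := by
              unfold sachsPair; rw [if_neg hki, if_neg hkj, if_pos hk]
            rw [hp1]
            exact hGadj k
    · push_neg at hv
      rw [hnotS v hv]
      exact hGm v
  -- the flipped matching
  have hM'adj : ∀ v w, (sachsMatch p).Adj v w ↔ p v = w := by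
    intro v w
    constructor
    · rintro ⟨h | h, hne⟩
      · exact h
      · rw [← h, hpinvol]
    · intro h
      exact ⟨Or.inl h, fun he => hpfpf v (h.trans he.symm)⟩
  have hM'pm : IsPerfectMatchingSub G (sachsMatch p) := by
    constructor
    · intro v w h
      rw [hM'adj] at h
      rw [← h]
      exact hGp v
    · intro v
      rw [sachsDeg, Nat.card_eq_one_iff_unique]
      constructor
      · constructor
        intro a b
        have ha := (hM'adj v a.1).mp a.2
        have hb := (hM'adj v b.1).mp b.2
        exact Subtype.ext (by rw [← ha, ← hb])
      · exact ⟨p v, (hM'adj v (p v)).mpr rfl⟩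
  have heqM : sachsMatch p = M := hMun _ hM'pm
  -- but the two matchings differ at f i
  have hMadj : M.Adj (f i) (f (i+1)) := by
    rw [hfs0 i hieven]
    exact hmadj (f i)
  have hM'nadj : ¬ (sachsMatch p).Adj (f i) (f (i+1)) := by
    rw [hM'adj, hponS i (le_refl i) (by omega)]
    have hp1 : sachsPair i j i = j - 1 := by unfold sachsPair; rw [if_pos rfl]
    rw [hp1]
    exact fun he => hinj (i+1) (j-1) (by omega) (by omega) he.symm
  rw [heqM] at hM'nadj
  exact hM'nadj hMadj
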